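/- (Vinogradov's formula) Let p be a prime and let u be a unit in (ℤ/pℤ)ˣ. Then (φ(p−1)/(p−1)) · Σ_{d | p−1} (μ(d)/φ(d)) · Σ_{χ : orderOf(χ) = d} χ(u) = 1 if the order of u in (ℤ/pℤ)ˣ equals p−1, and equals 0 otherwise, where the inner sum runs over all multiplicative characters χ of (ℤ/pℤ)ˣ into ℂ whose order is exactly d. -/

import Mathlib

open Finset

section AuxVinogradov

open ArithmeticFunction


lemma totient_complex (M : ℕ) :
    (Nat.totient M : ℂ) = M * ∏ q ∈ M.primeFactors, (1 - (q : ℂ)⁻¹) := by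
  have h := Nat.totient_eq_mul_prod_factors M
  have h2 := congrArg (Rat.castHom ℂ) h
  simp only [map_natCast, map_mul, map_prod, map_sub, map_one, map_inv₀] at h2
  exact h2

lemma moebius_filter_sum (N d : ℕ) (hN : N ≠ 0) (hdN : d ∣ N) :
    ∑ e ∈ N.divisors.filter (d ∣ ·), (moebius e : ℂ) / e
      = ((Nat.totient N : ℂ) / N) * ((moebius d : ℂ) / (Nat.totient d : ℂ)) := by
  classical
  by_cases hsf : Squarefree d
  swap
  · rw [moebius_eq_zero_of_not_squarefree hsf]
    rw [Finset.sum_eq_zero]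
    · simp
    · intro e he
      rw [mem_filter] at he
      have : ¬ Squarefree e := fun h => hsf (h.squarefree_of_dvd he.2)
      rw [moebius_eq_zero_of_not_squarefree this]
      simp
  · have hd0 : d ≠ 0 := hsf.ne_zero
    set t := N / d with ht
    have htd : d * t = N := Nat.mul_div_cancel' hdN
    have ht0 : t ≠ 0 := by
      intro h; rw [h, mul_zero] at htd; exact hN htd.symm
    have hμdZ : (moebius d : ℤ) ≠ 0 := moebius_ne_zero_iff_squarefree.mpr hsf
    have hμd : ((moebius d : ℤ) : ℂ) ≠ 0 := Int.cast_ne_zero.mpr hμdZ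
    have hdC : (d : ℂ) ≠ 0 := Nat.cast_ne_zero.mpr hd0
    have hNC : (N : ℂ) ≠ 0 := Nat.cast_ne_zero.mpr hN
    -- reindex
    have himg : N.divisors.filter (d ∣ ·) = t.divisors.image (d * ·) := by
      ext e
      simp only [mem_filter, Nat.mem_divisors, mem_image]
      constructor
      · rintro ⟨⟨heN, _⟩, s, rfl⟩
        refine ⟨s, ⟨?_, ht0⟩, rfl⟩
        exact (mul_dvd_mul_iff_left hd0).mp (htd ▸ heN)
      · rintro ⟨s, ⟨hst, _⟩, rfl⟩
        exact ⟨⟨htd ▸ mul_dvd_mul_left d hst, hN⟩, dvd_mul_right d s⟩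
    rw [himg, Finset.sum_image (fun x _ y _ h => Nat.eq_of_mul_eq_mul_left (Nat.pos_of_ne_zero hd0) h)]
    -- the multiplicative function k
    set k : ArithmeticFunction ℂ := ⟨fun s => (moebius (d * s) : ℂ) / ((moebius d : ℂ) * s), by simp⟩
      with hkdef
    have hkapp : ∀ s : ℕ, k s = (moebius (d * s) : ℂ) / ((moebius d : ℂ) * s) := fun s => rfl
    have hterm : ∀ s ∈ t.divisors, (moebius (d * s) : ℂ) / ((d * s : ℕ) : ℂ)
        = ((moebius d : ℂ) / d) * k s := by
      intro s hs
      have hs0 : (s : ℂ) ≠ 0 := Nat.cast_ne_zero.mpr (Nat.pos_of_mem_divisors hs).ne'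
      rw [hkapp]
      push_cast
      field_simp
    rw [Finset.sum_congr rfl hterm, ← Finset.mul_sum]
    -- k is multiplicative
    have hkmul : k.IsMultiplicative := by
      constructor
      · rw [hkapp, Nat.mul_one, Nat.cast_one, mul_one, div_self hμd]
      · intro m n hmn
        rw [hkapp, hkapp, hkapp]
        by_cases h1 : Squarefree (d * m)
        swap
        · have h1' : ¬ Squarefree (d * (m * n)) := fun h =>
            h1 (h.squarefree_of_dvd ⟨n, by ring⟩)
          rw [moebius_eq_zero_of_not_squarefree h1, moebius_eq_zero_of_not_squarefree h1']
          simp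
        by_cases h2 : Squarefree (d * n)
        swap
        · have h2' : ¬ Squarefree (d * (m * n)) := fun h =>
            h2 (h.squarefree_of_dvd ⟨m, by ring⟩)
          rw [moebius_eq_zero_of_not_squarefree h2, moebius_eq_zero_of_not_squarefree h2']
          simp
        · obtain ⟨hdm, _, hsm⟩ := Nat.squarefree_mul_iff.mp h1
          obtain ⟨hdn, _, hsn⟩ := Nat.squarefree_mul_iff.mp h2
          have e1 : moebius (d * (m * n)) = moebius d * moebius m * moebius n := by
            rw [isMultiplicative_moebius.map_mul_of_coprime (hdm.mul_right hdn),
              isMultiplicative_moebius.map_mul_of_coprime hmn, mul_assoc]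
          have e2 : moebius (d * m) = moebius d * moebius m :=
            isMultiplicative_moebius.map_mul_of_coprime hdm
          have e3 : moebius (d * n) = moebius d * moebius n :=
            isMultiplicative_moebius.map_mul_of_coprime hdn
          have hm0 : (m : ℂ) ≠ 0 := Nat.cast_ne_zero.mpr hsm.ne_zero
          have hn0 : (n : ℂ) ≠ 0 := Nat.cast_ne_zero.mpr hsn.ne_zero
          rw [e1, e2, e3]
          push_cast
          field_simp
    have hmulζ : ((k * (zeta : ArithmeticFunction ℂ)) : ArithmeticFunction ℂ).IsMultiplicative :=
      hkmul.mul isMultiplicative_zeta.natCast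
    have hsum : ∑ s ∈ t.divisors, k s
        = ∏ q ∈ t.primeFactors, (if q ∣ d then 1 else 1 - (q : ℂ)⁻¹) := by
      rw [← coe_mul_zeta_apply,
        IsMultiplicative.multiplicative_factorization _ hmulζ ht0,
        Nat.prod_factorization_eq_prod_primeFactors]
      refine Finset.prod_congr rfl fun q hq => ?_
      have hqp : q.Prime := Nat.prime_of_mem_primeFactors hq
      have hq0 : (q : ℂ) ≠ 0 := Nat.cast_ne_zero.mpr hqp.ne_zero
      set a := t.factorization q with ha
      have ha1 : 1 ≤ a := (Nat.Prime.factorization_pos_of_dvd hqp ht0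
        (Nat.dvd_of_mem_primeFactors hq))
      rw [coe_mul_zeta_apply, Nat.sum_divisors_prime_pow hqp]
      have hk2 : ∀ i ∈ Finset.range (a + 1), i ∉ Finset.range 2 → k (q ^ i) = 0 := by
        intro i _ hi2
        have h2i : 2 ≤ i := by
          simp only [Finset.mem_range, not_lt] at hi2; exact hi2
        have : ¬ Squarefree (d * q ^ i) := by
          intro h
          have hqq : q * q ∣ q ^ i := by
            rw [← pow_two]; exact pow_dvd_pow q h2i
          exact hqp.not_isUnit (h q (dvd_mul_of_dvd_right hqq d))
        rw [hkapp, moebius_eq_zero_of_not_squarefree this]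
        simp
      rw [← Finset.sum_subset (Finset.range_subset_range.mpr (by omega)) hk2]
      rw [Finset.sum_range_succ, Finset.sum_range_one, pow_zero, pow_one, hkmul.1]
      by_cases hqd : q ∣ d
      · rw [if_pos hqd]
        have : ¬ Squarefree (d * q) := by
          intro h
          exact hqp.not_isUnit (h q (by
            obtain ⟨c, rfl⟩ := hqd
            exact ⟨c, by ring⟩))
        rw [hkapp, moebius_eq_zero_of_not_squarefree this]
        simp
      · rw [if_neg hqd]
        have hcop : Nat.Coprime d q := (hqp.coprime_iff_not_dvd.mpr hqd).symm
        rw [hkapp, isMultiplicative_moebius.map_mul_of_coprime hcop,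
          moebius_apply_prime hqp]
        push_cast
        field_simp
        ring
    rw [hsum]
    -- turn the product of ifs into a product over a set difference
    have hite : ∀ q, (if q ∣ d then (1:ℂ) else 1 - (q:ℂ)⁻¹)
        = (if ¬ q ∣ d then 1 - (q:ℂ)⁻¹ else 1) := by
      intro q; by_cases h : q ∣ d <;> simp [h]
    simp only [hite]
    rw [← Finset.prod_filter]
    have hset : t.primeFactors.filter (fun q => ¬ q ∣ d)
        = N.primeFactors \ d.primeFactors := by
      ext q
      simp only [mem_filter, Nat.mem_primeFactors, mem_sdiff, ht0, hN, hd0, ne_eq,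
        not_false_eq_true, and_true]
      constructor
      · rintro ⟨⟨hq, hqt⟩, hqd⟩
        exact ⟨⟨hq, hqt.trans ⟨d, by rw [mul_comm, htd]⟩⟩, fun h => hqd h.2⟩
      · rintro ⟨⟨hq, hqN⟩, hqd⟩
        have hqd' : ¬ q ∣ d := fun h => hqd ⟨hq, h⟩
        refine ⟨⟨hq, ?_⟩, hqd'⟩
        have : q ∣ d * t := htd ▸ hqN
        exact (hq.dvd_mul.mp this).resolve_left hqd'
    rw [hset]
    rw [totient_complex N, totient_complex d]
    have hsub : d.primeFactors ⊆ N.primeFactors := Nat.primeFactors_mono hdN hN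
    have hsplit : (∏ q ∈ N.primeFactors \ d.primeFactors, (1 - (q:ℂ)⁻¹))
        * ∏ q ∈ d.primeFactors, (1 - (q:ℂ)⁻¹)
        = ∏ q ∈ N.primeFactors, (1 - (q:ℂ)⁻¹) := Finset.prod_sdiff hsub
    have hPd : (∏ q ∈ d.primeFactors, (1 - (q:ℂ)⁻¹)) ≠ 0 := by
      rw [Finset.prod_ne_zero_iff]
      intro q hq
      have hqp : q.Prime := Nat.prime_of_mem_primeFactors hq
      intro h
      have : (q:ℂ)⁻¹ = 1 := by linear_combination -h
      rw [inv_eq_one] at this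
      exact hqp.one_lt.ne' (by exact_mod_cast this)
    rw [← hsplit, mul_div_cancel_left₀ _ hNC]
    have h2 : (∏ q ∈ d.primeFactors, (1 - (q:ℂ)⁻¹))
        * ((moebius d : ℂ) / (↑d * ∏ q ∈ d.primeFactors, (1 - (q:ℂ)⁻¹)))
        = (moebius d : ℂ) / ↑d := by
      rw [mul_comm (d:ℂ), ← div_div, ← mul_div_assoc, ← mul_div_assoc,
        mul_div_cancel_left₀ _ hPd]
    rw [mul_assoc, h2, mul_comm]



end AuxVinogradov

/-- Vinogradov's formula: for a prime `p` and a unit `u` of `ℤ/pℤ`,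
`(φ(p−1)/(p−1)) ∑_{d ∣ p−1} (μ(d)/φ(d)) ∑_{ord(χ) = d} χ(u)` equals `1` if `u` has
order `p−1` in `(ZMod p)ˣ` and `0` otherwise; the inner sum runs over the multiplicative
characters `χ : (ZMod p)ˣ →* ℂˣ` of order exactly `d`. -/
theorem vinogradov_characteristic_function (p : ℕ) (hp : p.Prime) (u : (ZMod p)ˣ) :
    ((Nat.totient (p - 1) : ℂ) / ((p : ℂ) - 1)) *
      ∑ d ∈ (p - 1).divisors,
        ((ArithmeticFunction.moebius d : ℂ) / (Nat.totient d : ℂ)) *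
          ∑ᶠ (χ : (ZMod p)ˣ →* ℂˣ) (_ : orderOf χ = d), ((χ u : ℂˣ) : ℂ)
    = if orderOf u = p - 1 then 1 else 0 := by
  open ArithmeticFunction in
  classical
  haveI : Fact p.Prime := ⟨hp⟩
  set N := p - 1 with hNdef
  have hN0 : N ≠ 0 := Nat.sub_ne_zero_of_lt hp.one_lt
  have hcardG : Fintype.card (ZMod p)ˣ = N := by
    rw [ZMod.card_units_eq_totient, Nat.totient_prime hp]
  haveI : NeZero ((Monoid.exponent (ZMod p)ˣ : ℂ)) :=
    ⟨Nat.cast_ne_zero.mpr Monoid.exponent_ne_zero_of_finite⟩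
  obtain ⟨E⟩ := CommGroup.monoidHom_mulEquiv_of_hasEnoughRootsOfUnity (ZMod p)ˣ ℂ
  haveI : Fintype ((ZMod p)ˣ →* ℂˣ) := Fintype.ofEquiv _ E.toEquiv.symm
  haveI : IsCyclic ((ZMod p)ˣ →* ℂˣ) := isCyclic_of_surjective E.symm E.symm.surjective
  have hcardD : Fintype.card ((ZMod p)ˣ →* ℂˣ) = N := by
    rw [← hcardG]; exact Fintype.card_congr E.toEquiv
  obtain ⟨c, hc⟩ := IsCyclic.exists_generator (α := (ZMod p)ˣ →* ℂˣ)
  have hordc : orderOf c = N := by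
    rw [orderOf_eq_card_of_forall_mem_zpowers hc, Nat.card_eq_fintype_card, hcardD]
  have hcinj : Function.Injective c := by
    rw [injective_iff_map_eq_one]
    intro v hv
    by_contra hv1
    obtain ⟨φ, hφ⟩ := CommGroup.exists_apply_ne_one_of_hasEnoughRootsOfUnity (ZMod p)ˣ ℂ hv1
    obtain ⟨kk, hkk⟩ := (Submonoid.mem_powers_iff φ c).mp (mem_powers_iff_mem_zpowers.mpr (hc φ))
    apply hφ
    rw [← hkk, MonoidHom.pow_apply, hv, one_pow]
  have horduN : orderOf u ∣ N := hcardG ▸ orderOf_dvd_card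
  set S : ℕ → ℂ := fun d =>
    ∑ χ ∈ univ.filter (fun χ : (ZMod p)ˣ →* ℂˣ => orderOf χ = d), ((χ u : ℂˣ) : ℂ) with hSdef
  have hfin : ∀ d : ℕ,
      (∑ᶠ (χ : (ZMod p)ˣ →* ℂˣ) (_ : orderOf χ = d), ((χ u : ℂˣ) : ℂ)) = S d := by
    intro d
    exact finsum_cond_eq_sum_of_cond_iff _ (by intros; simp)
  -- Step B : orthogonality evaluation
  have hT : ∀ e ∈ N.divisors,
      (∑ χ ∈ univ.filter (fun χ : (ZMod p)ˣ →* ℂˣ => χ ^ e = 1), ((χ u : ℂˣ) : ℂ))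
      = if u ^ (N / e) = 1 then (e : ℂ) else 0 := by
    intro e he
    obtain ⟨heN, -⟩ := Nat.mem_divisors.mp he
    have he0 : e ≠ 0 := (Nat.pos_of_mem_divisors he).ne'
    set m := N / e with hm
    have hme : m * e = N := Nat.div_mul_cancel heN
    have hm0 : m ≠ 0 := by intro h; rw [h, zero_mul] at hme; exact hN0 hme.symm
    set w := c ^ m with hw
    have hordw : orderOf w = e := by
      rw [hw, orderOf_pow' c hm0, hordc, Nat.gcd_eq_right ⟨e, hme.symm⟩, ← hme,
        Nat.mul_div_cancel_left _ (Nat.pos_of_ne_zero hm0)]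
    have hfilter : univ.filter (fun χ : (ZMod p)ˣ →* ℂˣ => χ ^ e = 1)
        = (Finset.range e).image (fun i => w ^ i) := by
      ext χ
      simp only [mem_filter, mem_univ, true_and, mem_image, mem_range]
      constructor
      · intro hχe
        obtain ⟨kk, hkk⟩ :=
          (Submonoid.mem_powers_iff χ c).mp (mem_powers_iff_mem_zpowers.mpr (hc χ))
        have hNdvd : N ∣ kk * e := by
          rw [← hordc]
          apply orderOf_dvd_of_pow_eq_one
          rw [pow_mul, hkk, hχe]
        have hmk : m ∣ kk := by
          rw [← hme] at hNdvd
          exact (Nat.mul_dvd_mul_iff_right (Nat.pos_of_ne_zero he0)).mp hNdvd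
        obtain ⟨k', rfl⟩ := hmk
        refine ⟨k' % e, Nat.mod_lt _ (Nat.pos_of_ne_zero he0), ?_⟩
        have h1 : w ^ (k' % e) = w ^ k' := by
          rw [← hordw]; exact pow_mod_orderOf w k'
        rw [h1, hw]
        exact (pow_mul c m k').symm.trans hkk
      · rintro ⟨i, hi, rfl⟩
        refine (pow_mul w i e).symm.trans ?_
        exact orderOf_dvd_iff_pow_eq_one.mp (hordw ▸ Dvd.intro_left i rfl)
    rw [hfilter, Finset.sum_image (g := fun i => w ^ i) (fun i hi j hj hij =>
      pow_injOn_Iio_orderOf (by simpa [hordw] using mem_range.mp hi)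
        (by simpa [hordw] using mem_range.mp hj) hij)]
    have happ : ∀ i : ℕ, (((w ^ i) u : ℂˣ) : ℂ) = (((w u : ℂˣ) : ℂ)) ^ i := by
      intro i; rw [MonoidHom.pow_apply, Units.val_pow_eq_pow_val]
    simp only [happ]
    set z : ℂ := ((w u : ℂˣ) : ℂ) with hz
    have hze : z ^ e = 1 := by
      have hwe : w ^ e = 1 := by rw [← hordw]; exact pow_orderOf_eq_one w
      rw [hz, ← Units.val_pow_eq_pow_val, ← MonoidHom.pow_apply, hwe,
        MonoidHom.one_apply, Units.val_one]
    have hziff : z = 1 ↔ u ^ m = 1 := by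
      have h1 : w u = (c u) ^ m := by rw [hw, MonoidHom.pow_apply]
      have h2 : orderOf (c u) = orderOf u := orderOf_injective c hcinj u
      rw [hz, Units.val_eq_one, h1, ← orderOf_dvd_iff_pow_eq_one, h2,
        orderOf_dvd_iff_pow_eq_one]
    by_cases hu1 : u ^ m = 1
    · rw [if_pos hu1]
      have hz1 : z = 1 := hziff.mpr hu1
      simp [hz1]
    · rw [if_neg hu1]
      have hz1 : z ≠ 1 := fun h => hu1 (hziff.mp h)
      rw [geom_sum_eq hz1, hze]
      simp
  -- Step A : partition by exact order
  have hA : ∀ e ∈ N.divisors,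
      (∑ χ ∈ univ.filter (fun χ : (ZMod p)ˣ →* ℂˣ => χ ^ e = 1), ((χ u : ℂˣ) : ℂ))
      = ∑ d ∈ e.divisors, S d := by
    intro e he
    have he0 : e ≠ 0 := (Nat.pos_of_mem_divisors he).ne'
    have h1 : univ.filter (fun χ : (ZMod p)ˣ →* ℂˣ => χ ^ e = 1)
        = univ.filter (fun χ => orderOf χ ∣ e) := by
      apply filter_congr; intro χ _; simp [orderOf_dvd_iff_pow_eq_one]
    have hmaps : ∀ χ ∈ univ.filter (fun χ : (ZMod p)ˣ →* ℂˣ => orderOf χ ∣ e),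
        orderOf χ ∈ e.divisors := by
      intro χ hχ; rw [Nat.mem_divisors]; exact ⟨(mem_filter.mp hχ).2, he0⟩
    rw [h1, ← Finset.sum_fiberwise_of_maps_to hmaps (fun χ => ((χ u : ℂˣ) : ℂ))]
    refine Finset.sum_congr rfl fun d hd => ?_
    rw [hSdef]
    congr 1
    ext χ
    simp only [mem_filter, mem_univ, true_and, and_iff_right_iff_imp]
    intro h
    exact h ▸ (Nat.mem_divisors.mp hd).1
  -- coefficients
  have hNC : (N : ℂ) ≠ 0 := Nat.cast_ne_zero.mpr hN0
  have hφN : (Nat.totient N : ℂ) ≠ 0 :=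
    Nat.cast_ne_zero.mpr (Nat.totient_pos.mpr (Nat.pos_of_ne_zero hN0)).ne'
  have hunit : (N : ℂ) / (Nat.totient N : ℂ) * ((Nat.totient N : ℂ) / N) = 1 := by
    field_simp
  have hW : ∀ d ∈ N.divisors,
      (∑ e ∈ N.divisors.filter (d ∣ ·), ((N : ℂ) / (Nat.totient N : ℂ)) * ((moebius e : ℂ) / e))
      = (moebius d : ℂ) / (Nat.totient d : ℂ) := by
    intro d hd
    rw [← Finset.mul_sum, moebius_filter_sum N d hN0 (Nat.mem_divisors.mp hd).1,
      ← mul_assoc, hunit, one_mul]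
  set R := N / orderOf u with hRdef
  have hRN : R ∣ N := Nat.div_dvd_of_dvd horduN
  have hcond : ∀ e ∈ N.divisors, (u ^ (N / e) = 1 ↔ e ∣ R) := by
    intro e he
    obtain ⟨heN, -⟩ := Nat.mem_divisors.mp he
    rw [← orderOf_dvd_iff_pow_eq_one, Nat.dvd_div_iff_mul_dvd heN,
      hRdef, Nat.dvd_div_iff_mul_dvd horduN, mul_comm]
  -- the main computation
  have hmain : ∑ d ∈ N.divisors, ((moebius d : ℂ) / (Nat.totient d : ℂ)) * S d
      = ((N : ℂ) / (Nat.totient N : ℂ)) * (if R = 1 then 1 else 0) := by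
    have hswap : ∀ (F : ℕ → ℂ),
        ∑ e ∈ N.divisors, ∑ d ∈ e.divisors, F e * S d
        = ∑ d ∈ N.divisors, ∑ e ∈ N.divisors.filter (d ∣ ·), F e * S d := by
      intro F
      refine Finset.sum_comm' fun e d => ?_
      simp only [Nat.mem_divisors, mem_filter]
      constructor
      · rintro ⟨⟨heN, -⟩, hde, -⟩
        exact ⟨⟨⟨heN, hN0⟩, hde⟩, hde.trans heN, hN0⟩
      · rintro ⟨⟨⟨heN, -⟩, hde⟩, -⟩
        exact ⟨⟨heN, hN0⟩, hde, (Nat.pos_of_ne_zero (fun h => hN0 (Nat.eq_zero_of_zero_dvd (h ▸ heN) ))).ne'⟩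
    calc ∑ d ∈ N.divisors, ((moebius d : ℂ) / (Nat.totient d : ℂ)) * S d
        = ∑ d ∈ N.divisors, ∑ e ∈ N.divisors.filter (d ∣ ·),
            (((N : ℂ) / (Nat.totient N : ℂ)) * ((moebius e : ℂ) / e)) * S d := by
          refine Finset.sum_congr rfl fun d hd => ?_
          rw [← Finset.sum_mul, hW d hd]
      _ = ∑ e ∈ N.divisors, ∑ d ∈ e.divisors,
            (((N : ℂ) / (Nat.totient N : ℂ)) * ((moebius e : ℂ) / e)) * S d :=
          (hswap _).symm
      _ = ∑ e ∈ N.divisors, (((N : ℂ) / (Nat.totient N : ℂ)) * ((moebius e : ℂ) / e))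
            * (if u ^ (N / e) = 1 then (e : ℂ) else 0) := by
          refine Finset.sum_congr rfl fun e he => ?_
          rw [← Finset.mul_sum, ← hA e he, hT e he]
      _ = ((N : ℂ) / (Nat.totient N : ℂ)) *
            ∑ e ∈ N.divisors, (if e ∣ R then (moebius e : ℂ) else 0) := by
          rw [Finset.mul_sum]
          refine Finset.sum_congr rfl fun e he => ?_
          have he0 : (e : ℂ) ≠ 0 :=
            Nat.cast_ne_zero.mpr (Nat.pos_of_mem_divisors he).ne'
          rw [mul_assoc]
          congr 1
          by_cases hcase : e ∣ R
          · rw [if_pos hcase, if_pos ((hcond e he).mpr hcase), div_mul_cancel₀ _ he0]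
          · rw [if_neg hcase, if_neg (fun h => hcase ((hcond e he).mp h)), mul_zero]
      _ = ((N : ℂ) / (Nat.totient N : ℂ)) * ∑ e ∈ R.divisors, (moebius e : ℂ) := by
          rw [← Finset.sum_filter, Nat.divisors_filter_dvd_of_dvd hN0 hRN]
      _ = ((N : ℂ) / (Nat.totient N : ℂ)) * (if R = 1 then 1 else 0) := by
          congr 1
          have h := congrArg (fun f : ArithmeticFunction ℂ => f R)
            (coe_moebius_mul_coe_zeta (R := ℂ))
          simp only [coe_mul_zeta_apply, intCoe_apply, one_apply] at h
          exact h
  -- finish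
  have hcast : ((N : ℕ) : ℂ) = (p : ℂ) - 1 := by
    rw [hNdef, Nat.cast_sub hp.one_lt.le, Nat.cast_one]
  have hiff : R = 1 ↔ orderOf u = N := by
    rw [hRdef]
    constructor
    · intro h
      have := Nat.div_mul_cancel horduN
      rw [h, one_mul] at this
      exact this
    · intro h; rw [h, Nat.div_self (Nat.pos_of_ne_zero hN0)]
  have hgoal1 : ∑ d ∈ N.divisors,
      ((moebius d : ℂ) / (Nat.totient d : ℂ)) *
        ∑ᶠ (χ : (ZMod p)ˣ →* ℂˣ) (_ : orderOf χ = d), ((χ u : ℂˣ) : ℂ)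
      = ∑ d ∈ N.divisors, ((moebius d : ℂ) / (Nat.totient d : ℂ)) * S d :=
    Finset.sum_congr rfl fun d _ => by rw [hfin d]
  rw [← hcast, hgoal1, hmain, ← mul_assoc, div_mul_div_cancel₀, div_self hφN, one_mul]
  · simp only [hiff]
  · exact hNC
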